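/- Let d ≥ 1 and ω : Fin d → ℝ. Let C^{x'|x}_{y'|y} ∈ ℂ (for x,x',y,y' ∈ Fin d) be coefficients such that the matrix J indexed by pairs, J_{(x',x),(y',y)} := C^{x'|x}_{y'|y}, is positive semidefinite, and C^{x'|x}_{y'|y} = 0 whenever ω_{x'} − ω_x ≠ ω_{y'} − ω_y. Set P_{x'|x} := Re(C^{x'|x}_{x'|x}) (the diagonal entries of J, which are real and nonnegative). Then for every complex d×d matrix ρ, the matrix σ defined by σ_{x'y'} := Σ_{x,y} C^{x'|x}_{y'|y} ρ_{xy} satisfies, for all x',y': |σ_{x'y'}| ≤ Σ_{(x,y) : ω_x − ω_y = ω_{x'} − ω_{y'}} √(P_{x'|x} P_{y'|y}) · |ρ_{xy}|. (Theorem 2, non-Markovian covariant decoherence bound.) -/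

import Mathlib

open Matrix Finset
open scoped ComplexOrder


open scoped MatrixOrder Matrix.Norms.L2Operator in
lemma psd_entry_bound {n : Type*} [Fintype n] [DecidableEq n]
    {J : Matrix n n ℂ} (h : J.PosSemidef) (i j : n) :
    ‖J i j‖ ≤ Real.sqrt ((J i i).re * (J j j).re) := by
  obtain ⟨B, hB⟩ := CStarAlgebra.nonneg_iff_eq_star_mul_self.mp h.nonneg
  rw [star_eq_conjTranspose] at hB
  set f : EuclideanSpace ℂ n := WithLp.toLp 2 (fun k => B k i) with hf
  set g : EuclideanSpace ℂ n := WithLp.toLp 2 (fun k => B k j) with hg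
  have hJij : J i j = inner (𝕜 := ℂ) f g := by
    simp [hB, Matrix.mul_apply, PiLp.inner_apply, hf, hg, mul_comm]
  have hJii : (J i i).re = ‖f‖ ^ 2 := by
    have : J i i = inner (𝕜 := ℂ) f f := by
      simp [hB, Matrix.mul_apply, PiLp.inner_apply, hf, mul_comm, -inner_self_eq_norm_sq_to_K]
    rw [this]; exact inner_self_eq_norm_sq (𝕜 := ℂ) _
  have hJjj : (J j j).re = ‖g‖ ^ 2 := by
    have : J j j = inner (𝕜 := ℂ) g g := by
      simp [hB, Matrix.mul_apply, PiLp.inner_apply, hg, mul_comm, -inner_self_eq_norm_sq_to_K]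
    rw [this]; exact inner_self_eq_norm_sq (𝕜 := ℂ) _
  rw [hJij, hJii, hJjj]
  calc ‖inner (𝕜 := ℂ) f g‖ ≤ ‖f‖ * ‖g‖ := by
        exact norm_inner_le_norm f g
    _ = Real.sqrt (‖f‖^2 * ‖g‖^2) := by
        rw [Real.sqrt_mul (sq_nonneg _), Real.sqrt_sq (norm_nonneg _),
          Real.sqrt_sq (norm_nonneg _)]

/-- **Theorem 2 (non-Markovian covariant decoherence bound).** For a time-translation
covariant completely positive map with coefficients `C^{x'|x}_{y'|y}` (positive
semidefinite Choi-type matrix, vanishing off the mode structure) and population transfer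
coefficients `P_{x'|x} = C^{x'|x}_{x'|x}`, the output coherences obey
`|σ_{x'y'}| ≤ Σ_{ω_x−ω_y = ω_{x'}−ω_{y'}} √(P_{x'|x} P_{y'|y}) |ρ_{xy}|`. -/
theorem covariant_decoherence_bound
    (d : ℕ) (hd : 1 ≤ d) (ω : Fin d → ℝ)
    (C : Fin d → Fin d → Fin d → Fin d → ℂ)
    (J : Matrix (Fin d × Fin d) (Fin d × Fin d) ℂ)
    (hJ : ∀ x' x y' y, J (x', x) (y', y) = C x' x y' y)
    (hPSD : J.PosSemidef)
    (hcov : ∀ x' x y' y, ω x' - ω x ≠ ω y' - ω y → C x' x y' y = 0)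
    (P : Fin d → Fin d → ℝ)
    (hP : ∀ x' x, P x' x = (C x' x x' x).re)
    (ρ σ : Matrix (Fin d) (Fin d) ℂ)
    (hσ : ∀ x' y', σ x' y' = ∑ x, ∑ y, C x' x y' y * ρ x y) :
    ∀ x' y', ‖σ x' y'‖ ≤
      ∑ p ∈ Finset.univ.filter
          (fun p : Fin d × Fin d => ω p.1 - ω p.2 = ω x' - ω y'),
        Real.sqrt (P x' p.1 * P y' p.2) * ‖ρ p.1 p.2‖ := by
  intro x' y'
  have hsum : σ x' y' = ∑ p ∈ Finset.univ.filter
      (fun p : Fin d × Fin d => ω p.1 - ω p.2 = ω x' - ω y'),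
      C x' p.1 y' p.2 * ρ p.1 p.2 := by
    rw [hσ, ← Finset.sum_product' (s := Finset.univ) (t := Finset.univ)]
    rw [Finset.univ_product_univ]
    rw [← Finset.sum_filter_add_sum_filter_not Finset.univ
      (fun p : Fin d × Fin d => ω p.1 - ω p.2 = ω x' - ω y')]
    have : ∑ p ∈ Finset.univ.filter
        (fun p : Fin d × Fin d => ¬ (ω p.1 - ω p.2 = ω x' - ω y')),
        C x' p.1 y' p.2 * ρ p.1 p.2 = 0 := by
      apply Finset.sum_eq_zero
      intro p hp
      simp only [Finset.mem_filter] at hp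
      rw [hcov x' p.1 y' p.2 (by intro h; exact hp.2 (by linarith)), zero_mul]
    rw [this, add_zero]
  rw [hsum]
  refine le_trans (norm_sum_le _ _) (Finset.sum_le_sum fun p hp => ?_)
  rw [norm_mul]
  apply mul_le_mul_of_nonneg_right _ (norm_nonneg _)
  have := psd_entry_bound hPSD (x', p.1) (y', p.2)
  rw [hJ, hJ, hJ] at this
  rwa [hP, hP]
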